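/- Let E and F be locally cartesian closed categories with W-types and H : E → F a locally cartesian closed functor. If H has a right adjoint, then H preserves W-types: for every endopolynomial I ←h– A –g→ B –f→ I in E, the functor Alg(P_{f,g,h}) → Alg(P_{Hf,Hg,Hh}) induced by the strong morphism (H/I, σ) : P_{f,g,h} → P_{Hf,Hg,Hh} preserves initial objects. -/

import Mathlib

open CategoryTheory CategoryTheory.Limits

universe v u v₂ u₂

variable {E : Type u} [Category.{v} E] {F : Type u₂} [Category.{v₂} F]

/-- A category with finite limits is locally cartesian closed if every pullback functor
`f* : E/J ⥤ E/I` has a right adjoint (pushforward). -/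
def IsLCC (E : Type u) [Category.{v} E] [HasFiniteLimits E] : Prop :=
  ∀ ⦃I J : E⦄ (f : I ⟶ J), (Over.pullback f).IsLeftAdjoint

/-- `E` has W-types if every polynomial endofunctor `f_! ∘ g_* ∘ h* : E/I ⥤ E/I` has an
initial algebra. -/
def HasWTypes (E : Type u) [Category.{v} E] [HasFiniteLimits E] : Prop :=
  ∀ ⦃I A B : E⦄ (h : A ⟶ I) (g : A ⟶ B) (f : B ⟶ I) (gStar : Over A ⥤ Over B),
    Nonempty (Over.pullback g ⊣ gStar) →
      HasInitial (Endofunctor.Algebra (Over.pullback h ⋙ gStar ⋙ Over.map f))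

/-- A finite-limit-preserving functor `H` preserves pushforwards if for every `f : I ⟶ J`
and pushforwards `f_*` (right adjoint to `f*` in `E`) and `(Hf)_*` (right adjoint to `(Hf)*`
in `F`), the sliced functors of `H` commute with the pushforwards up to isomorphism. -/
def PreservesPushforwards [HasFiniteLimits E] [HasFiniteLimits F] (H : E ⥤ F) : Prop :=
  ∀ ⦃I J : E⦄ (f : I ⟶ J) (fStar : Over I ⥤ Over J)
    (fStar' : Over (H.obj I) ⥤ Over (H.obj J)),
    Nonempty (Over.pullback f ⊣ fStar) → Nonempty (Over.pullback (H.map f) ⊣ fStar') →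
      Nonempty (fStar ⋙ Over.post H ≅ Over.post H ⋙ fStar')

/-- The functor `Alg(P) ⥤ Alg(Q)` induced by a lax morphism `(H, σ) : P → Q` of endofunctors,
sending `(X, s)` to `(HX, Hs ∘ σ X)`. -/
@[simps]
def algMap {P : E ⥤ E} {Q : F ⥤ F} (H : E ⥤ F) (σ : H ⋙ Q ⟶ P ⋙ H) :
    Endofunctor.Algebra P ⥤ Endofunctor.Algebra Q where
  obj A := ⟨H.obj A.a, σ.app A.a ≫ H.map A.str⟩
  map {A B} f :=
    { f := H.map f.f
      h := by
        have h1 := σ.naturality f.f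
        dsimp at h1 ⊢
        rw [← Category.assoc, h1, Category.assoc, Category.assoc, ← H.map_comp, f.h,
          H.map_comp] }
  map_id A := by ext; simp
  map_comp f g := by ext; simp

/-- `H` preserves W-types: for every endopolynomial `I ←h– A –g→ B –f→ I` of `E` and every
strong morphism `(H/I, σ) : P_{f,g,h} → P_{Hf,Hg,Hh}`, the induced functor
`Alg(P_{f,g,h}) ⥤ Alg(P_{Hf,Hg,Hh})` preserves initial objects. -/
def PreservesWTypes [HasFiniteLimits E] [HasFiniteLimits F] (H : E ⥤ F) : Prop :=
  ∀ ⦃I A B : E⦄ (h : A ⟶ I) (g : A ⟶ B) (f : B ⟶ I)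
    (gStar : Over A ⥤ Over B) (_ : Nonempty (Over.pullback g ⊣ gStar))
    (gStar' : Over (H.obj A) ⥤ Over (H.obj B))
    (_ : Nonempty (Over.pullback (H.map g) ⊣ gStar'))
    (σ : Over.post H ⋙ (Over.pullback (H.map h) ⋙ gStar' ⋙ Over.map (H.map f)) ≅
        (Over.pullback h ⋙ gStar ⋙ Over.map f) ⋙ Over.post H)
    (W : Endofunctor.Algebra (Over.pullback h ⋙ gStar ⋙ Over.map f)),
    Nonempty (IsInitial W) → Nonempty (IsInitial ((algMap (Over.post H) σ.hom).obj W))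


section AlgMapInitial

universe w₁ w₂ w₃ w₄

variable {C : Type w₁} [Category.{w₂} C] {D : Type w₃} [Category.{w₄} D]

/-- If `K : C ⥤ D` admits an objectwise right adjoint (a representing object `L Y` for the
functor `X ↦ (K.obj X ⟶ Y)`, naturally in `X`), and `σ : K ⋙ Q ≅ P ⋙ K` is a strong
morphism of endofunctors, then the induced functor `Alg(P) ⥤ Alg(Q)` preserves initial
objects. -/
theorem algMap_isInitial {P : C ⥤ C} {Q : D ⥤ D} (K : C ⥤ D) (σ : K ⋙ Q ≅ P ⋙ K)
    (L : D → C) (e : ∀ (X : C) (Y : D), (K.obj X ⟶ Y) ≃ (X ⟶ L Y))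
    (hnat : ∀ {X' X : C} {Y : D} (u : X' ⟶ X) (w : X ⟶ L Y),
      (e X' Y).symm (u ≫ w) = K.map u ≫ (e X Y).symm w)
    (W : Endofunctor.Algebra P) (hW : IsInitial W) :
    Nonempty (IsInitial ((algMap K σ.hom).obj W)) := by
  -- For each `Q`-algebra `T = (Y, t)`, put a `P`-algebra structure on `L Y`.
  let str' : ∀ T : Endofunctor.Algebra Q, (P.obj (L T.a) ⟶ L T.a) := fun T =>
    e _ _ (σ.inv.app (L T.a) ≫ Q.map ((e (L T.a) T.a).symm (𝟙 (L T.a))) ≫ T.str)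
  have key : ∀ (T : Endofunctor.Algebra Q) (X : C) (x : X ⟶ L T.a),
      (e (P.obj X) T.a).symm (P.map x ≫ str' T) =
        σ.inv.app X ≫ Q.map ((e X T.a).symm x) ≫ T.str := by
    intro T X x
    rw [hnat, Equiv.symm_apply_apply]
    have hσ := σ.inv.naturality x
    dsimp at hσ
    rw [← Category.assoc, hσ, Category.assoc, ← Category.assoc (Q.map (K.map x)),
      ← Q.map_comp, ← hnat]
    simp
  -- algebra-morphism conditions transfer along `e`.
  have cond_iff : ∀ (T : Endofunctor.Algebra Q) (x : W.a ⟶ L T.a),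
      (P.map x ≫ str' T = W.str ≫ x) ↔
        (Q.map ((e W.a T.a).symm x) ≫ T.str =
          (σ.hom.app W.a ≫ K.map W.str) ≫ (e W.a T.a).symm x) := by
    intro T x
    constructor
    · intro hx
      have := congrArg (e (P.obj W.a) T.a).symm hx
      rw [key, hnat] at this
      rw [Category.assoc, ← this, ← Category.assoc, ← Category.assoc]
      simp
    · intro hx
      apply (e (P.obj W.a) T.a).symm.injective
      rw [key, hnat, hx, ← Category.assoc, ← Category.assoc]
      simp
  -- the candidate morphism out of the image of `W`.
  let LA : ∀ T : Endofunctor.Algebra Q, Endofunctor.Algebra P := fun T => ⟨L T.a, str' T⟩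
  let toT : ∀ T : Endofunctor.Algebra Q, ((algMap K σ.hom).obj W ⟶ T) := fun T =>
    { f := (e W.a T.a).symm (hW.to (LA T)).f
      h := by
        have := (cond_iff T (hW.to (LA T)).f).mp (hW.to (LA T)).h
        exact this }
  refine ⟨IsInitial.ofUniqueHom toT fun T m => ?_⟩
  ext
  have hx : P.map (e W.a T.a m.f) ≫ str' T = W.str ≫ e W.a T.a m.f := by
    rw [cond_iff]
    rw [(e W.a T.a).symm_apply_apply m.f]
    exact m.h
  have : (⟨e W.a T.a m.f, hx⟩ : W ⟶ LA T) = hW.to (LA T) := hW.hom_ext _ _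
  have hf : e W.a T.a m.f = (hW.to (LA T)).f := congrArg Endofunctor.Algebra.Hom.f this
  show m.f = (toT T).f
  dsimp [toT]
  rw [← hf, (e W.a T.a).symm_apply_apply m.f]

end AlgMapInitial

/-- a locally cartesian closed functor between locally cartesian closed
categories with W-types which has a right adjoint preserves W-types. -/
theorem left_adjoint_preserves_wTypes [HasFiniteLimits E] [HasFiniteLimits F]
    (hE : IsLCC E) (hF : IsLCC F) (hWE : HasWTypes E) (hWF : HasWTypes F)
    (H : E ⥤ F) [PreservesFiniteLimits H] (hpush : PreservesPushforwards H)
    (R : F ⥤ E) (adj : H ⊣ R) :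
    PreservesWTypes H := by
  intro I A B h g f gStar _ gStar' _ σ W hW
  -- objectwise right adjoint of `Over.post H` built from `R` and pullback along the unit.
  let L : Over (H.obj I) → Over I := fun Y =>
    Over.mk (pullback.snd (R.map Y.hom) (adj.unit.app I))
  -- the hom-set equivalence
  let e : ∀ (X : Over I) (Y : Over (H.obj I)),
      ((Over.post H).obj X ⟶ Y) ≃ (X ⟶ L Y) := fun X Y =>
    { toFun := fun u => Over.homMk
        (pullback.lift (adj.homEquiv X.left Y.left u.left) X.hom (by
          refine (adj.homEquiv_naturality_right _ _).symm.trans ?_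
          have hw : @CategoryStruct.comp F _ (H.obj X.left) Y.left (H.obj I) u.left Y.hom
              = H.map X.hom := by exact Over.w u
          rw [hw, Adjunction.homEquiv_unit]
          simpa using (adj.unit.naturality X.hom).symm))
        (by dsimp [L]; exact pullback.lift_snd _ _ _)
      invFun := fun v => Over.homMk
        ((adj.homEquiv X.left Y.left).symm (v.left ≫ pullback.fst _ _)) (by
          refine (adj.homEquiv_naturality_right_symm _ _).symm.trans ?_
          have hc : (v.left ≫ pullback.fst (R.map Y.hom) (adj.unit.app I)) ≫ R.map Y.hom
              = X.hom ≫ adj.unit.app I := by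
            rw [Category.assoc, pullback.condition, ← Category.assoc]
            have hv := Over.w v
            dsimp [L] at hv
            rw [hv]
          rw [hc, Adjunction.homEquiv_counit]
          simp; rfl)
      left_inv := fun u => by
        ext
        refine (congrArg (adj.homEquiv X.left Y.left).symm (pullback.lift_fst _ _ _)).trans ?_
        exact (adj.homEquiv _ _).symm_apply_apply _
      right_inv := fun v => by
        ext
        dsimp
        apply pullback.hom_ext
        · refine (pullback.lift_fst _ _ _).trans ?_
          exact (adj.homEquiv _ _).apply_symm_apply _
        · have hv := Over.w v
          dsimp [L] at hv
          exact (pullback.lift_snd _ _ _).trans hv.symm }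
  have hnat : ∀ {X' X : Over I} {Y : Over (H.obj I)} (u : X' ⟶ X) (w : X ⟶ L Y),
      (e X' Y).symm (u ≫ w) = (Over.post H).map u ≫ (e X Y).symm w := by
    intro X' X Y u w
    ext
    dsimp [e]
    show (adj.homEquiv X'.left Y.left).symm
        ((u ≫ w).left ≫ pullback.fst (R.map Y.hom) (adj.unit.app I)) =
      H.map u.left ≫ (adj.homEquiv X.left Y.left).symm
        (w.left ≫ pullback.fst (R.map Y.hom) (adj.unit.app I))
    rw [Adjunction.homEquiv_counit, Adjunction.homEquiv_counit]
    simp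
  exact algMap_isInitial (Over.post H) σ L e hnat W hW.some
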